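/- Let A be a unital C*-algebra, H a Hilbert space, Φ : A → B(H) a unital *-homomorphism, and Ψ : A → B(H) a completely positive map such that Φ − Ψ is also completely positive. Then there exists a unique operator z in the commutant of Φ(A) with 0 ≤ z ≤ 1 such that Ψ(x) = z·Φ(x) for all x ∈ A. -/

import Mathlib

open ComplexOrder

-- scalar aux
lemma aux_real (r d : ℝ) (hd : 0 ≤ d) (h : ∀ s : ℝ, 0 < s → |r| ≤ s * d) : r = 0 := by
  by_contra hr
  have h1 : 0 < |r| := abs_pos.mpr hr
  have h2 := h (|r| / (2 * (d + 1))) (by positivity)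
  rw [div_mul_eq_mul_div, le_div_iff₀ (by positivity)] at h2
  nlinarith

lemma aux_complex (B C D : ℂ)
    (h : ∀ t : ℂ, 0 ≤ t * B + (starRingEnd ℂ) t * C + ((starRingEnd ℂ) t * t) * D) :
    B = 0 ∧ C = 0 := by
  have key : ∀ w : ℂ, (∀ s : ℝ, 0 ≤ (s : ℂ) * w + (s : ℂ) ^ 2 * D) → w = 0 := by
    intro w hw
    have him : ∀ s : ℝ, 0 = s * w.im + s ^ 2 * D.im := by
      intro s
      have := (Complex.le_def.mp (hw s)).2
      simpa [Complex.add_im, Complex.mul_im, Complex.ofReal_pow, pow_two, Complex.mul_re] using this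
    have hre : ∀ s : ℝ, 0 ≤ s * w.re + s ^ 2 * D.re := by
      intro s
      have := (Complex.le_def.mp (hw s)).1
      simpa [Complex.add_re, Complex.ofReal_pow, pow_two, Complex.mul_re, Complex.mul_im] using this
    have hwim : w.im = 0 := by
      have h1 := him 1; have h2 := him (-1); nlinarith
    have hd : 0 ≤ D.re := by
      have h1 := hre 1; have h2 := hre (-1); nlinarith
    have hwre : w.re = 0 := by
      apply aux_real _ _ hd
      intro s hs
      have h1 := hre s; have h2 := hre (-s)
      rcases abs_cases w.re with ⟨he, _⟩ | ⟨he, _⟩ <;> nlinarith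
    exact Complex.ext hwre hwim
  have h1 : B + C = 0 := by
    apply key
    intro s
    have := h (s : ℂ)
    convert this using 1
    simp [Complex.conj_ofReal]; ring
  have h2 : B - C = 0 := by
    have := key (Complex.I * (B - C)) ?_
    · have hI : Complex.I ≠ 0 := Complex.I_ne_zero
      rcases mul_eq_zero.mp this with h' | h'
      · exact absurd h' hI
      · exact h'
    intro s
    have := h ((s : ℂ) * Complex.I)
    convert this using 1
    simp [Complex.conj_ofReal, map_mul, Complex.conj_I, Complex.I_sq]
    ring_nf
    rw [Complex.I_sq]
    ring
  constructor
  · linear_combination (h1 + h2) / 2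
  · linear_combination (h1 - h2) / 2

/-- A linear map into `B(H)` is completely positive if for every `k`, every
`a : Fin k → A` and `ξ : Fin k → H`, the matrix positivity condition
`0 ≤ ∑ i j, ⟪Ψ(aᵢ* aⱼ) ξⱼ, ξᵢ⟫` holds. -/
def IsCompletelyPositive
    {A : Type*} [NormedRing A] [StarRing A] [NormedAlgebra ℂ A]
    {H : Type*} [NormedAddCommGroup H] [InnerProductSpace ℂ H] [CompleteSpace H]
    (Ψ : A →ₗ[ℂ] (H →L[ℂ] H)) : Prop :=
  ∀ (k : ℕ) (a : Fin k → A) (ξ : Fin k → H),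
    0 ≤ ∑ i, ∑ j, (inner ℂ ((Ψ (star (a i) * a j)) (ξ j)) (ξ i) : ℂ)

lemma aux_nonneg_re (c : ℂ) (h : 0 ≤ c) : ((c.re : ℝ) : ℂ) = c ∧ 0 ≤ c.re := by
  rw [Complex.le_def] at h
  simp only [Complex.zero_re, Complex.zero_im] at h
  exact ⟨Complex.ext (by simp) (by simp [← h.2]), h.1⟩

theorem stmt0
    {A : Type*} [NormedRing A] [StarRing A] [CStarRing A] [CompleteSpace A]
    [NormedAlgebra ℂ A] [StarModule ℂ A]
    {H : Type*} [NormedAddCommGroup H] [InnerProductSpace ℂ H] [CompleteSpace H]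
    (Φ : A →⋆ₐ[ℂ] (H →L[ℂ] H)) (Ψ : A →ₗ[ℂ] (H →L[ℂ] H))
    (hΨ : IsCompletelyPositive Ψ)
    (hdiff : IsCompletelyPositive (Φ.toAlgHom.toLinearMap - Ψ)) :
    ∃! z : H →L[ℂ] H,
      (∀ x : A, z * Φ x = Φ x * z) ∧ 0 ≤ z ∧ z ≤ 1 ∧ ∀ x : A, Ψ x = z * Φ x := by
  classical
  have hz : ∀ ξ : H, 0 ≤ (inner ℂ ((Ψ 1) ξ) ξ : ℂ) := by
    intro ξ
    have := hΨ 1 ![1] ![ξ]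
    simpa using this
  have hz1 : ∀ ξ : H, 0 ≤ (inner ℂ ξ ξ : ℂ) - inner ℂ ((Ψ 1) ξ) ξ := by
    intro ξ
    have := hdiff 1 ![1] ![ξ]
    simpa [LinearMap.sub_apply, ContinuousLinearMap.sub_apply, inner_sub_left] using this
  have key : ∀ (x : A) (ξ η : H),
      ((inner ℂ ((Ψ x) ξ) η : ℂ) - inner ℂ ((Ψ 1) ((Φ x) ξ)) η = 0) ∧
      ((inner ℂ ((Ψ (star x)) η) ξ : ℂ) - inner ℂ ((Ψ 1) η) ((Φ x) ξ) = 0) := by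
    intro x ξ η
    set u := (Φ x) ξ with hu
    set S2 : ℂ := inner ℂ ((Ψ (star x * x)) ξ) ξ - inner ℂ ((Ψ (star x)) u) ξ
        - inner ℂ ((Ψ x) ξ) u + inner ℂ ((Ψ 1) u) u with hS2def
    have expandΨ2 : ∑ i, ∑ j,
        (inner ℂ ((Ψ (star (![x, (1:A)] i) * ![x, (1:A)] j)) (![ξ, -u] j)) (![ξ, -u] i) : ℂ)
        = S2 := by
      simp only [Fin.sum_univ_two, Matrix.cons_val_zero, Matrix.cons_val_one, Matrix.head_cons,
        map_neg, inner_neg_left, inner_neg_right, star_one, mul_one, one_mul, hS2def]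
      ring
    have hP : 0 ≤ S2 := by
      have := hΨ 2 ![x, 1] ![ξ, -u]
      rwa [expandΨ2] at this
    have hQ : 0 ≤ -S2 := by
      have h0 := hdiff 2 ![x, 1] ![ξ, -u]
      have hΦsum : ∑ i, ∑ j,
          (inner ℂ ((Φ (star (![x, (1:A)] i) * ![x, (1:A)] j)) (![ξ, -u] j)) (![ξ, -u] i) : ℂ)
          = 0 := by
        simp only [Fin.sum_univ_two, Matrix.cons_val_zero, Matrix.cons_val_one, Matrix.head_cons,
          map_neg, inner_neg_left, inner_neg_right, star_one, mul_one, one_mul, map_one, map_mul,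
          map_star, ContinuousLinearMap.mul_apply, ContinuousLinearMap.one_apply,
          ContinuousLinearMap.star_eq_adjoint, ContinuousLinearMap.adjoint_inner_left, ← hu]
        ring
      have hexp : ∑ i, ∑ j,
          (inner ℂ (((Φ.toAlgHom.toLinearMap - Ψ) (star (![x, (1:A)] i) * ![x, (1:A)] j))
            (![ξ, -u] j)) (![ξ, -u] i) : ℂ)
          = (∑ i, ∑ j, (inner ℂ ((Φ (star (![x, (1:A)] i) * ![x, (1:A)] j)) (![ξ, -u] j))
              (![ξ, -u] i) : ℂ))
            - ∑ i, ∑ j, (inner ℂ ((Ψ (star (![x, (1:A)] i) * ![x, (1:A)] j)) (![ξ, -u] j))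
              (![ξ, -u] i) : ℂ) := by
        simp only [LinearMap.sub_apply, AlgHom.toLinearMap_apply, StarAlgHom.coe_toAlgHom,
          ContinuousLinearMap.sub_apply, inner_sub_left, Finset.sum_sub_distrib]
      have := h0
      rw [hexp, hΦsum, expandΨ2, zero_sub] at this
      exact this
    have hS2 : S2 = 0 := le_antisymm (by simpa using neg_nonneg.mp (by simpa using hQ)) hP
    set B : ℂ := inner ℂ ((Ψ x) ξ) η - inner ℂ ((Ψ 1) u) η with hBdef
    set C : ℂ := inner ℂ ((Ψ (star x)) η) ξ - inner ℂ ((Ψ 1) η) u with hCdef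
    set D : ℂ := inner ℂ ((Ψ 1) η) η with hDdef
    have h3 : ∀ t : ℂ, 0 ≤ t * B + (starRingEnd ℂ) t * C + ((starRingEnd ℂ) t * t) * D := by
      intro t
      have h0 := hΨ 3 ![x, 1, 1] ![ξ, -u, t • η]
      have hexp3 : ∑ i, ∑ j,
          (inner ℂ ((Ψ (star (![x, (1:A), 1] i) * ![x, (1:A), 1] j)) (![ξ, -u, t • η] j))
            (![ξ, -u, t • η] i) : ℂ)
          = S2 + (t * B + (starRingEnd ℂ) t * C + ((starRingEnd ℂ) t * t) * D) := by
        simp only [Fin.sum_univ_three, Matrix.cons_val_zero, Matrix.cons_val_one,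
          Matrix.head_cons, Matrix.cons_val_two, Matrix.tail_cons, map_neg, map_smul,
          inner_neg_left, inner_neg_right, inner_smul_left, inner_smul_right,
          star_one, mul_one, one_mul, hS2def, hBdef, hCdef, hDdef]
        ring
      rwa [hexp3, hS2, zero_add] at h0
    exact aux_complex B C D h3
  have hΨeq : ∀ x : A, Ψ x = Ψ 1 * Φ x := by
    intro x
    ext ξ
    refine ext_inner_right ℂ fun η => ?_
    have := sub_eq_zero.mp (key x ξ η).1
    simpa [ContinuousLinearMap.mul_apply] using this
  have hΨeq' : ∀ x : A, Ψ x = Φ x * Ψ 1 := by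
    intro x
    ext η
    refine ext_inner_right ℂ fun ξ => ?_
    have h := sub_eq_zero.mp (key (star x) ξ η).2
    rw [star_star] at h
    rw [ContinuousLinearMap.mul_apply]
    rw [h, map_star, ContinuousLinearMap.star_eq_adjoint,
      ContinuousLinearMap.adjoint_inner_right]
  refine ⟨Ψ 1, ⟨?_, ?_, ?_, fun x => hΨeq x⟩, ?_⟩
  · intro x
    rw [← hΨeq x, hΨeq' x]
  · rw [ContinuousLinearMap.nonneg_iff_isPositive, ContinuousLinearMap.isPositive_iff_complex]
    intro ξ
    have h := aux_nonneg_re _ (hz ξ)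
    simpa only [RCLike.re_to_complex] using ⟨h.1, h.2⟩
  · rw [ContinuousLinearMap.le_def, ContinuousLinearMap.isPositive_iff_complex]
    intro ξ
    have h := hz1 ξ
    have heq : ((inner ℂ ξ ξ : ℂ) - inner ℂ ((Ψ 1) ξ) ξ) = inner ℂ (((1 - Ψ 1 : H →L[ℂ] H)) ξ) ξ := by
      simp [ContinuousLinearMap.sub_apply, inner_sub_left]
    rw [heq] at h
    have h2 := aux_nonneg_re _ h
    simpa only [RCLike.re_to_complex] using ⟨h2.1, h2.2⟩
  · rintro z' ⟨-, -, -, heq⟩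
    have := heq 1
    simpa using this.symm
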